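/- If K_+ and K_− are virtual knot diagrams differing by a crossing change at a single crossing c₁, then for every other crossing c_i the wriggle numbers agree: W(L_{c_i}) computed in K_+ equals W(L_{ĉ_i}) computed in K_−. -/

import Mathlib

open scoped Classical
open LaurentPolynomial

noncomputable section

/-- A Gauss diagram for an oriented virtual knot with `n` classical crossings: a circle
with `2 * n` marked points (positions in `ZMod (2*n)`, traversed in cyclic order), and for
each crossing `c` a signed oriented chord, recorded by the position `over c` of its
over-passage (head), the position `under c` of its under-passage (tail), and its sign. -/
structure GaussDiagram (n : ℕ) where
  over' : Fin n → ZMod (2 * n)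
  under : Fin n → ZMod (2 * n)
  sign : Fin n → ℤ
  endpoints_inj : Function.Injective
    (fun p : Fin n × Bool => if p.2 then over' p.1 else under p.1)
  sign_pm : ∀ c, sign c = 1 ∨ sign c = -1

namespace GaussDiagram

/-- `x` lies strictly inside the arc running forward (in the orientation of the circle)
from `a` to `b`. -/
def Between {m : ℕ} (a b x : ZMod m) : Prop :=
  (x - a).val < (b - a).val ∧ x ≠ a

variable {n : ℕ}

/-- After orientedly smoothing the crossing `c`, the first component of the resulting
2-component link `L_c` (the component carrying the dot placed on the incoming understrand
of `c`) is the arc running forward from the over-passage of `c` to its under-passage. -/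
def onComp1 (G : GaussDiagram n) (c : Fin n) (x : ZMod (2 * n)) : Prop :=
  Between (G.over' c) (G.under c) x

/-- The chords `c` and `d` intersect (interleave): exactly one endpoint of `d` lies in the
arc cut out by `c`; equivalently `d` becomes a linking crossing of the smoothed link `L_c`. -/
def Crosses (G : GaussDiagram n) (c d : Fin n) : Prop :=
  Xor' (G.onComp1 c (G.over' d)) (G.onComp1 c (G.under d))

/-- `d ∈ P_c`: `d` intersects `c` positively (traveling along the first component of `L_c`
one passes *over* `d`). -/
def PosAt (G : GaussDiagram n) (c d : Fin n) : Prop :=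
  G.Crosses c d ∧ G.onComp1 c (G.over' d)

/-- `d ∈ N_c`: `d` intersects `c` negatively (traveling along the first component of `L_c`
one passes *under* `d`). -/
def NegAt (G : GaussDiagram n) (c d : Fin n) : Prop :=
  G.Crosses c d ∧ G.onComp1 c (G.under d)

/-- The wriggle number `W(L_c) = lk_O(L_c) - lk_U(L_c)` of the ordered 2-component link
obtained by the oriented smoothing at `c`. -/
def wriggle (G : GaussDiagram n) (c : Fin n) : ℤ :=
  (∑ d ∈ Finset.univ.filter (fun d => G.PosAt c d), G.sign d)
    - ∑ d ∈ Finset.univ.filter (fun d => G.NegAt c d), G.sign d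

/-- The writhe: the sum of the signs of all crossings. -/
def writhe (G : GaussDiagram n) : ℤ := ∑ c, G.sign c

/-- The Wriggle Polynomial `W_K(t) = Σ_c sign(c) · t^{W(L_c)} - writhe(K)`, as a Laurent
polynomial over `ℤ`. -/
def wrigglePoly (G : GaussDiagram n) : LaurentPolynomial ℤ :=
  (∑ c, C (G.sign c) * T (G.wriggle c)) - C G.writhe

end GaussDiagram

namespace GaussDiagram

variable {n : ℕ}

/-- `G'` is obtained from `G` by a crossing change at the crossing `c₁`: the over/under
data at `c₁` is exchanged (the chord is reversed) and its sign is switched, while all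
other crossings are unchanged. -/
def IsCrossingChange (G G' : GaussDiagram n) (c₁ : Fin n) : Prop :=
  G'.over' = Function.update G.over' c₁ (G.under c₁) ∧
  G'.under = Function.update G.under c₁ (G.over' c₁) ∧
  G'.sign = Function.update G.sign c₁ (-(G.sign c₁))

/-- A crossing is odd iff the two occurrences of the crossing in the Gauss code are
separated by an odd number of letters, i.e. the forward distance between the two endpoints
of its chord is even. -/
def OddCrossing (G : GaussDiagram n) (c : Fin n) : Prop :=
  Even ((G.under c - G.over' c).val)

end GaussDiagram

open GaussDiagram

/-- If `K₊` and `K₋` are virtual knot diagrams differing by a crossing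
change at a single crossing `c₁`, then for every other crossing `c` the wriggle numbers
agree: `W(L_c)` computed in `K₊` equals `W(L_ĉ)` computed in `K₋`. -/
theorem wriggle_crossingChange_other {n : ℕ} (G G' : GaussDiagram n) (c₁ : Fin n)
    (h : GaussDiagram.IsCrossingChange G G' c₁) :
    ∀ c : Fin n, c ≠ c₁ → G.wriggle c = G'.wriggle c := by
 classical
  intro c hc
  obtain ⟨ho, hu, hs⟩ := h
  have hoc : G'.over' c = G.over' c := by rw [ho]; exact Function.update_of_ne hc _ _
  have huc : G'.under c = G.under c := by rw [hu]; exact Function.update_of_ne hc _ _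
  have hcomp : ∀ x, G'.onComp1 c x = G.onComp1 c x := by
    intro x; unfold onComp1; rw [hoc, huc]
  have key : ∀ G₀ : GaussDiagram n, G₀.wriggle c =
      ∑ d, ((if G₀.PosAt c d then G₀.sign d else 0) - (if G₀.NegAt c d then G₀.sign d else 0)) := by
    intro G₀
    unfold wriggle
    rw [Finset.sum_sub_distrib, Finset.sum_filter, Finset.sum_filter]
  rw [key G, key G']
  apply Finset.sum_congr rfl
  intro d _
  by_cases hd : d = c₁
  · subst hd
    have h1 : G'.over' d = G.under d := by rw [ho]; simp
    have h2 : G'.under d = G.over' d := by rw [hu]; simp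
    have h3 : G'.sign d = -(G.sign d) := by rw [hs]; simp
    have hP : G'.PosAt c d ↔ G.NegAt c d := by
      unfold PosAt NegAt Crosses
      rw [hcomp, hcomp, h1, h2]
      constructor
      · rintro ⟨hx, hy⟩; exact ⟨hx.symm, hy⟩
      · rintro ⟨hx, hy⟩; exact ⟨hx.symm, hy⟩
    have hN : G'.NegAt c d ↔ G.PosAt c d := by
      unfold PosAt NegAt Crosses
      rw [hcomp, hcomp, h1, h2]
      constructor
      · rintro ⟨hx, hy⟩; exact ⟨hx.symm, hy⟩
      · rintro ⟨hx, hy⟩; exact ⟨hx.symm, hy⟩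
    rw [hP, hN, h3]
    by_cases hA : G.PosAt c d <;> by_cases hB : G.NegAt c d <;> simp [hA, hB]
  · have h1 : G'.over' d = G.over' d := by rw [ho]; exact Function.update_of_ne hd _ _
    have h2 : G'.under d = G.under d := by rw [hu]; exact Function.update_of_ne hd _ _
    have h3 : G'.sign d = G.sign d := by rw [hs]; exact Function.update_of_ne hd _ _
    have hP : G'.PosAt c d ↔ G.PosAt c d := by
      unfold PosAt Crosses; rw [hcomp, hcomp, h1, h2]
    have hN : G'.NegAt c d ↔ G.NegAt c d := by
      unfold NegAt Crosses; rw [hcomp, hcomp, h1, h2]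
    rw [hP, hN, h3]
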